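/- Let 𝔫 be the 5-dimensional real Lie algebra with orthonormal basis {E₁,…,E₅} and non-zero brackets [E₁,E₂] = m·E₄ and [E₁,E₃] = s·E₅, where m ≥ s > 0 (the two-step nilpotent Lie algebra with two-dimensional center). Then there exist c ∈ ℝ and a derivation D of 𝔫 with Ric = c·Id + D if and only if s = m; moreover, in that case necessarily c = −2m². -/
import Mathlib


open scoped BigOperators

namespace Nilsoliton2

noncomputable section

abbrev V : Type := Fin 5 → ℝ

/-- The orthonormal basis vectors E₁,…,E₅ (indexed 0,…,4). -/
def E (i : Fin 5) : V := Pi.single i 1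

/-- The inner product making `E` an orthonormal basis. -/
def ip (x y : V) : ℝ := ∑ i, x i * y i

/-- `D` is a derivation of the bracket `br`. -/
def IsDerivation (br : V → V → V) (D : V →ₗ[ℝ] V) : Prop :=
  ∀ X Y : V, D (br X Y) = br (D X) Y + br X (D Y)

/-- `Ric` is the Ricci operator of the nilpotent Lie group with left-invariant
metric determined by the bracket `br` and the orthonormal basis `E`. -/
def IsRicci (br : V → V → V) (Ric : V →ₗ[ℝ] V) : Prop :=
  ∀ X Y : V, ip (Ric X) Y =
      -(1/2) * (∑ i : Fin 5, ip (br X (E i)) (br Y (E i)))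
      + (1/4) * (∑ i : Fin 5, ∑ j : Fin 5, ip (br (E i) (E j)) X * ip (br (E i) (E j)) Y)

/-- The bracket: [E₁,E₂] = m·E₄, [E₁,E₃] = s·E₅. -/
def br (m s : ℝ) (X Y : V) : V :=
  (m * (X 0 * Y 1 - X 1 * Y 0)) • E 3 + (s * (X 0 * Y 2 - X 2 * Y 0)) • E 4

lemma ipE (x : V) (j : Fin 5) : ip x (E j) = x j := by
  simp [ip, E, Pi.single_apply, mul_ite]

theorem stmt2 (m s : ℝ) (hms : m ≥ s) (hs : 0 < s)
    (Ric : V →ₗ[ℝ] V) (hRic : IsRicci (br m s) Ric) :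
    ((∃ (c : ℝ) (D : V →ₗ[ℝ] V), IsDerivation (br m s) D ∧
        Ric = c • (LinearMap.id : V →ₗ[ℝ] V) + D) ↔ (s = m)) ∧
    (∀ (c : ℝ) (D : V →ₗ[ℝ] V), IsDerivation (br m s) D →
        Ric = c • (LinearMap.id : V →ₗ[ℝ] V) + D → c = -2 * m ^ 2) := by
  have hm : 0 < m := lt_of_lt_of_le hs hms
  have hR : ∀ (X : V) (b : Fin 5),
      Ric X b = ![-((m^2+s^2)/2), -(m^2/2), -(s^2/2), m^2/2, s^2/2] b * X b := by
    intro X b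
    rw [← ipE (Ric X) b, hRic X (E b)]
    fin_cases b <;>
      · simp [ip, br, E, Fin.sum_univ_five, Pi.single_apply]
        ring
  have key : ∀ (c : ℝ) (D : V →ₗ[ℝ] V), IsDerivation (br m s) D →
      Ric = c • (LinearMap.id : V →ₗ[ℝ] V) + D → s = m ∧ c = -2*m^2 := by
    intro c D hD hEq
    have hDZ : ∀ Z : V, D Z = Ric Z - c • Z := by
      intro Z; rw [hEq]; simp
    have e1 := congrFun (hD (E 0) (E 1)) 3
    have e2 := congrFun (hD (E 0) (E 2)) 4
    simp only [hDZ] at e1 e2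
    simp only [Pi.sub_apply, Pi.smul_apply, smul_eq_mul, Pi.add_apply, hR] at e1 e2
    simp [br, E, Pi.single_apply, hR] at e1 e2
    have h1 : c = -(3*m^2+s^2)/2 := mul_left_cancel₀ (ne_of_gt hm) (by linear_combination e1)
    have h2 : c = -(m^2+3*s^2)/2 := mul_left_cancel₀ (ne_of_gt hs) (by linear_combination e2)
    have hmm : m^2 = s^2 := by rw [h1] at h2; linarith
    have hz : (m - s) * (m + s) = 0 := by linear_combination hmm
    have hsm : s = m := by
      rcases mul_eq_zero.1 hz with h | h
      · linarith
      · linarith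
    refine ⟨hsm, by rw [hsm] at h1; linarith⟩
  constructor
  · constructor
    · rintro ⟨c, D, hD, hEq⟩
      exact (key c D hD hEq).1
    · intro hsm
      subst hsm
      refine ⟨-2*s^2, Ric + (2*s^2) • (LinearMap.id : V →ₗ[ℝ] V), ?_, ?_⟩
      · intro X Y
        funext b
        simp only [LinearMap.add_apply, LinearMap.smul_apply, LinearMap.id_coe, id_eq,
          Pi.add_apply, Pi.smul_apply, smul_eq_mul, hR]
        fin_cases b <;>
          · simp [br, E, Pi.single_apply, hR]
            try ring
      · ext X
        simp
  · intro c D hD hEq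
    exact (key c D hD hEq).2

end

end Nilsoliton2
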